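/- arXiv:2605.17529 — 3 statements merged into one kernel-verified Lean document; each statement's English description precedes it below -/
import Mathlib

section
/- Let α₁,…,α_k ∈ ℝ and δ > 0. Then there exists δ' with 0 < δ' ≤ δ such that the set E = {m ∈ ℕ : ‖α_i · m‖ < δ' for all 1 ≤ i ≤ k} has a natural density that exists and is positive. -/
open Filter

/-- Distance from a real number to the nearest integer. -/
noncomputable def distNearestInt (x : ℝ) : ℝ := |x - round x|

/-- A set of naturals is thick if it contains arbitrarily long blocks of
consecutive integers. -/
def Thick (S : Set ℕ) : Prop := ∀ L : ℕ, ∃ N : ℕ, ∀ j : ℕ, j ≤ L → N + j ∈ S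

/-- A set of naturals is syndetic if it has bounded gaps. -/
def Syndetic (S : Set ℕ) : Prop :=
  ∃ G : ℕ, 0 < G ∧ ∀ a : ℕ, ∃ n ∈ S, a ≤ n ∧ n < a + G

/-- A set is piecewise syndetic if it is the intersection of a thick set and a
syndetic set. -/
def PiecewiseSyndetic (S : Set ℕ) : Prop :=
  ∃ T B : Set ℕ, Thick T ∧ Syndetic B ∧ S = T ∩ B

open Classical in
/-- The number of elements of `E ∩ {1, …, N}`. -/
noncomputable def countIn (E : Set ℕ) (N : ℕ) : ℕ :=
  ((Finset.Icc 1 N).filter (fun n => n ∈ E)).card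

/-- `E` has a natural density that exists and is positive. -/
def PosDensity (E : Set ℕ) : Prop :=
  ∃ d : ℝ, 0 < d ∧
    Tendsto (fun N : ℕ => (countIn E N : ℝ) / (N : ℝ)) atTop (nhds d)

/-- The return-time set `R_u(E) = {n : ∃ m ∈ E, m + u n ∈ E}`. -/
def retSet (u : ℕ → ℤ) (E : Set ℕ) : Set ℕ :=
  {n : ℕ | ∃ m m' : ℕ, m ∈ E ∧ m' ∈ E ∧ (m' : ℤ) = (m : ℤ) + u n}

/-- The return-time set along the floor of a real-valued function. -/
noncomputable def retSetFloor (f : ℝ → ℝ) (E : Set ℕ) : Set ℕ :=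
  retSet (fun n => ⌊f (n : ℝ)⌋) E

/-- The return-time set along the closest integer to a real-valued function. -/
noncomputable def retSetRound (f : ℝ → ℝ) (E : Set ℕ) : Set ℕ :=
  retSet (fun n => round (f (n : ℝ))) E

/-! ### Auxiliary development: Cesàro averages of almost periodic sequences -/

open Finset Pointwise AddCircle


noncomputable def cavg (u : ℕ → ℂ) (N : ℕ) : ℂ := (N : ℂ)⁻¹ • ∑ m ∈ Finset.Icc 1 N, u m

def HasAvg (u : ℕ → ℂ) : Prop := ∃ l : ℂ, Tendsto (cavg u) atTop (nhds l)

lemma cavg_add (u v : ℕ → ℂ) : cavg (u + v) = cavg u + cavg v := by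
  funext N; simp [cavg, Finset.sum_add_distrib]; ring

lemma cavg_smul (c : ℂ) (u : ℕ → ℂ) : cavg (c • u) = c • cavg u := by
  funext N
  simp only [cavg, Pi.smul_apply, smul_eq_mul, Finset.mul_sum]
  exact Finset.sum_congr rfl fun x _ => by ring

lemma HasAvg.add {u v : ℕ → ℂ} (hu : HasAvg u) (hv : HasAvg v) : HasAvg (u + v) := by
  obtain ⟨l, hl⟩ := hu; obtain ⟨l', hl'⟩ := hv
  exact ⟨l + l', by rw [cavg_add]; exact hl.add hl'⟩

lemma HasAvg.smul (c : ℂ) {u : ℕ → ℂ} (hu : HasAvg u) : HasAvg (c • u) := by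
  obtain ⟨l, hl⟩ := hu
  refine ⟨c * l, ?_⟩
  rw [cavg_smul]
  exact hl.const_mul c

lemma HasAvg.zero : HasAvg (0 : ℕ → ℂ) :=
  ⟨0, by
    have : cavg (0 : ℕ → ℂ) = fun _ => 0 := by funext N; simp [cavg]
    rw [this]; exact tendsto_const_nhds⟩

noncomputable def expSeq (β : ℝ) : ℕ → ℂ := fun m =>
  Complex.exp (2 * Real.pi * Complex.I * β) ^ m

lemma hasAvg_expSeq (β : ℝ) : HasAvg (expSeq β) := by
  set z : ℂ := Complex.exp (2 * Real.pi * Complex.I * β) with hz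
  have hznorm : ‖z‖ = 1 := by
    rw [hz]
    have : (2 : ℂ) * Real.pi * Complex.I * β = ((2 * Real.pi * β : ℝ) : ℂ) * Complex.I := by
      push_cast; ring
    rw [this, Complex.norm_exp_ofReal_mul_I]
  by_cases h1 : z = 1
  · refine ⟨1, ?_⟩
    have heq : ∀ N : ℕ, 1 ≤ N → cavg (expSeq β) N = 1 := by
      intro N hN
      simp only [cavg, expSeq, ← hz, h1, one_pow, Finset.sum_const, Nat.card_Icc]
      have hne : (N : ℂ) ≠ 0 := Nat.cast_ne_zero.2 (by omega)
      simp only [Nat.add_sub_cancel, nsmul_eq_mul, mul_one, smul_eq_mul]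
      field_simp
    exact tendsto_const_nhds.congr' (by
      filter_upwards [eventually_ge_atTop 1] with N hN using (heq N hN).symm)
  · refine ⟨0, ?_⟩
    have key : ∀ N : ℕ, ‖cavg (expSeq β) N‖ ≤ (2 / ‖z - 1‖ + 1 + 1) / N := by
      intro N
      rcases Nat.eq_zero_or_pos N with h | h
      · simp [h, cavg]
      have hicc : Finset.Icc 1 N = Finset.Ico 1 (N + 1) := by
        ext; simp [Nat.lt_succ_iff]
      have hsum : ∑ m ∈ Finset.Icc 1 N, z ^ m
          = (z ^ (N + 1) - 1) / (z - 1) - 1 := by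
        have hz1 : z - 1 ≠ 0 := sub_ne_zero.2 h1
        rw [hicc, Finset.sum_Ico_eq_sub _ (by omega), geom_sum_eq h1, geom_sum_eq h1]
        field_simp
      have hbound : ‖∑ m ∈ Finset.Icc 1 N, z ^ m‖ ≤ 2 / ‖z - 1‖ + 1 + 1 := by
        rw [hsum]
        have hpos : 0 < ‖z - 1‖ := norm_pos_iff.2 (sub_ne_zero.2 h1)
        have h2 : ‖(z ^ (N + 1) - 1) / (z - 1)‖ ≤ 2 / ‖z - 1‖ := by
          rw [norm_div]
          have h3 : ‖z ^ (N + 1) - 1‖ ≤ 2 := by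
            refine (norm_sub_le _ _).trans ?_
            rw [norm_pow, hznorm, one_pow, norm_one]
            norm_num
          gcongr
        have h4 := norm_sub_le ((z ^ (N + 1) - 1) / (z - 1)) 1
        have h5 : ‖(1 : ℂ)‖ = 1 := norm_one
        linarith
      calc ‖cavg (expSeq β) N‖ = ‖(N : ℂ)⁻¹‖ * ‖∑ m ∈ Finset.Icc 1 N, z ^ m‖ := by
            simp [cavg, expSeq, ← hz, norm_smul]
        _ ≤ (N : ℝ)⁻¹ * (2 / ‖z - 1‖ + 1 + 1) := by
            have hn : ‖((N : ℂ))⁻¹‖ = ((N : ℝ))⁻¹ := by simp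
            rw [hn]
            gcongr
        _ = (2 / ‖z - 1‖ + 1 + 1) / N := by ring
    refine squeeze_zero_norm key ?_
    exact tendsto_const_div_atTop_nhds_zero_nat _



lemma cavg_dist_le {u v : ℕ → ℂ} {ε : ℝ} (hε : 0 ≤ ε) (h : ∀ m, ‖u m - v m‖ ≤ ε) (N : ℕ) :
    ‖cavg u N - cavg v N‖ ≤ ε := by
  rcases Nat.eq_zero_or_pos N with h0 | h0
  · simp [h0, cavg, hε]
  have : cavg u N - cavg v N = (N : ℂ)⁻¹ • ∑ m ∈ Finset.Icc 1 N, (u m - v m) := by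
    simp only [cavg, smul_eq_mul, Finset.sum_sub_distrib]
    ring
  rw [this, norm_smul]
  have h1 : ‖∑ m ∈ Finset.Icc 1 N, (u m - v m)‖ ≤ (N : ℝ) * ε := by
    refine (norm_sum_le _ _).trans ?_
    calc ∑ m ∈ Finset.Icc 1 N, ‖u m - v m‖ ≤ ∑ m ∈ Finset.Icc 1 N, ε :=
          Finset.sum_le_sum fun m _ => h m
      _ = (N : ℝ) * ε := by simp [Nat.card_Icc]
  have h2 : ‖((N : ℂ))⁻¹‖ = ((N : ℝ))⁻¹ := by simp
  rw [h2]
  calc ((N : ℝ))⁻¹ * ‖∑ m ∈ Finset.Icc 1 N, (u m - v m)‖ ≤ ((N : ℝ))⁻¹ * ((N : ℝ) * ε) := by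
        gcongr
    _ = ε := by field_simp

lemma hasAvg_of_approx {u : ℕ → ℂ}
    (h : ∀ ε : ℝ, 0 < ε → ∃ v : ℕ → ℂ, (∀ m, ‖u m - v m‖ ≤ ε) ∧ HasAvg v) : HasAvg u := by
  have hc : CauchySeq (cavg u) := by
    rw [Metric.cauchySeq_iff]
    intro ε hε
    obtain ⟨v, hv, l, hl⟩ := h (ε / 4) (by linarith)
    have hcv : CauchySeq (cavg v) := hl.cauchySeq
    rw [Metric.cauchySeq_iff] at hcv
    obtain ⟨N₀, hN₀⟩ := hcv (ε / 4) (by linarith)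
    refine ⟨N₀, fun p hp q hq => ?_⟩
    have d1 : dist (cavg u p) (cavg v p) ≤ ε / 4 := by
      rw [dist_eq_norm]; exact cavg_dist_le (by linarith) hv p
    have d2 : dist (cavg u q) (cavg v q) ≤ ε / 4 := by
      rw [dist_eq_norm]; exact cavg_dist_le (by linarith) hv q
    have d3 := hN₀ p hp q hq
    calc dist (cavg u p) (cavg u q)
        ≤ dist (cavg u p) (cavg v p) + dist (cavg v p) (cavg v q) + dist (cavg v q) (cavg u q) :=
          dist_triangle4 _ _ _ _
      _ < ε := by rw [dist_comm (cavg v q)] at *; linarith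
  exact cauchySeq_tendsto_of_complete hc

/-- The set of exponential sequences. -/
def expSet : Set (ℕ → ℂ) := Set.range expSeq

/-- The span of exponential sequences. -/
noncomputable def spanExp : Submodule ℂ (ℕ → ℂ) := Submodule.span ℂ expSet

lemma expSeq_mul (β γ : ℝ) : expSeq β * expSeq γ = expSeq (β + γ) := by
  funext m
  simp only [Pi.mul_apply, expSeq, ← mul_pow, ← Complex.exp_add]
  congr 2
  push_cast
  ring

lemma spanExp_mul_mem {P Q : ℕ → ℂ} (hP : P ∈ spanExp) (hQ : Q ∈ spanExp) :
    P * Q ∈ spanExp := by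
  have h : expSet * expSet ⊆ expSet := by
    rintro x ⟨a, ⟨β, rfl⟩, b, ⟨γ, rfl⟩, rfl⟩
    exact ⟨β + γ, (expSeq_mul β γ).symm⟩
  have := Submodule.mul_mem_mul hP hQ
  rw [spanExp] at *
  rw [Submodule.span_mul_span] at this
  exact Submodule.span_mono h this

lemma hasAvg_of_mem_spanExp {P : ℕ → ℂ} (hP : P ∈ spanExp) : HasAvg P := by
  refine Submodule.span_induction ?_ HasAvg.zero (fun x y _ _ hx hy => hx.add hy)
    (fun c x _ hx => hx.smul c) hP
  rintro x ⟨β, rfl⟩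
  exact hasAvg_expSeq β

lemma spanExp_one : (1 : ℕ → ℂ) ∈ spanExp := by
  refine Submodule.subset_span ⟨0, ?_⟩
  funext m
  simp [expSeq]

/-- Bounded sequences uniformly approximable by trigonometric polynomials. -/
def ApproxE (u : ℕ → ℂ) : Prop :=
  (∃ C : ℝ, 0 ≤ C ∧ ∀ m, ‖u m‖ ≤ C) ∧
  ∀ ε : ℝ, 0 < ε → ∃ v ∈ spanExp, ∀ m, ‖u m - v m‖ ≤ ε

lemma ApproxE.hasAvg {u : ℕ → ℂ} (hu : ApproxE u) : HasAvg u := by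
  refine hasAvg_of_approx fun ε hε => ?_
  obtain ⟨v, hv, hvb⟩ := hu.2 ε hε
  exact ⟨v, hvb, hasAvg_of_mem_spanExp hv⟩

lemma ApproxE.one : ApproxE (1 : ℕ → ℂ) := by
  refine ⟨⟨1, zero_le_one, fun m => by simp⟩, fun ε hε => ⟨1, spanExp_one, fun m => by simp; linarith⟩⟩

lemma ApproxE.mul {u v : ℕ → ℂ} (hu : ApproxE u) (hv : ApproxE v) : ApproxE (u * v) := by
  obtain ⟨⟨C₁, hC₁, hub⟩, hua⟩ := hu
  obtain ⟨⟨C₂, hC₂, hvb⟩, hva⟩ := hv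
  refine ⟨⟨C₁ * C₂, by positivity, fun m => by
    rw [Pi.mul_apply, norm_mul]; exact mul_le_mul (hub m) (hvb m) (norm_nonneg _) hC₁⟩,
    fun ε hε => ?_⟩
  obtain ⟨P, hP, hPb⟩ := hua (ε / (2 * (C₂ + 1))) (by positivity)
  obtain ⟨Q, hQ, hQb⟩ := hva (min 1 (ε / (2 * (C₁ + 1)))) (by positivity)
  refine ⟨P * Q, spanExp_mul_mem hP hQ, fun m => ?_⟩
  have hQm : ‖Q m‖ ≤ C₂ + 1 := by
    have := hQb m
    have h1 : ‖v m - Q m‖ ≤ 1 := this.trans (min_le_left _ _)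
    have h2 : Q m = v m - (v m - Q m) := by ring
    rw [h2]
    exact (norm_sub_le _ _).trans (add_le_add (hvb m) h1)
  have key : u m * v m - P m * Q m = (u m) * (v m - Q m) + Q m * (u m - P m) := by ring
  calc ‖u m * v m - P m * Q m‖ ≤ ‖u m‖ * ‖v m - Q m‖ + ‖Q m‖ * ‖u m - P m‖ := by
        rw [key]; exact (norm_add_le _ _).trans (by rw [norm_mul, norm_mul])
    _ ≤ C₁ * (ε / (2 * (C₁ + 1))) + (C₂ + 1) * (ε / (2 * (C₂ + 1))) := by
        refine add_le_add ?_ ?_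
        · exact mul_le_mul (hub m) ((hQb m).trans (min_le_right _ _)) (norm_nonneg _) hC₁
        · exact mul_le_mul hQm (hPb m) (norm_nonneg _) (by positivity)
    _ ≤ ε / 2 + ε / 2 := by
        have e1 : C₁ * (ε / (2 * (C₁ + 1))) ≤ ε / 2 := by
          rw [mul_div_assoc', div_le_div_iff₀ (by positivity) two_pos]
          nlinarith
        have e2 : (C₂ + 1) * (ε / (2 * (C₂ + 1))) = ε / 2 := by
          have hne : C₂ + 1 ≠ 0 := by positivity
          field_simp
        linarith
    _ = ε := by ring

lemma ApproxE.prod {k : ℕ} {f : Fin k → ℕ → ℂ} (h : ∀ i, ApproxE (f i)) :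
    ApproxE (∏ i, f i) :=
  Finset.prod_induction f ApproxE (fun _ _ ha hb => ha.mul hb) ApproxE.one (fun i _ => h i)

lemma orbit_fourier_mem_spanExp (α : ℝ) (n : ℤ) :
    (fun m : ℕ => (fourier n ((α * m : ℝ) : AddCircle (1 : ℝ)))) ∈ spanExp := by
  haveI : Fact ((0 : ℝ) < 1) := ⟨one_pos⟩
  refine Submodule.subset_span ⟨n * α, ?_⟩
  funext m
  rw [expSeq, ← Complex.exp_nat_mul, fourier_coe_apply]
  push_cast
  congr 1
  field_simp

lemma orbit_spanFourier_mem_spanExp (α : ℝ) {P : C(AddCircle (1 : ℝ), ℂ)}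
    (hP : P ∈ Submodule.span ℂ (Set.range (@fourier 1))) :
    (fun m : ℕ => P ((α * m : ℝ) : AddCircle (1 : ℝ))) ∈ spanExp := by
  haveI : Fact ((0 : ℝ) < 1) := ⟨one_pos⟩
  refine Submodule.span_induction ?_ ?_ ?_ ?_ hP
  · rintro x ⟨n, rfl⟩
    exact orbit_fourier_mem_spanExp α n
  · have : (fun m : ℕ => ((0 : C(AddCircle (1 : ℝ), ℂ)) ((α * m : ℝ) : AddCircle (1 : ℝ)))) = (0 : ℕ → ℂ) := by
      funext m; simp
    rw [this]; exact Submodule.zero_mem _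
  · intro x y _ _ hx hy
    have : (fun m : ℕ => (x + y) ((α * m : ℝ) : AddCircle (1 : ℝ)))
        = (fun m : ℕ => x ((α * m : ℝ) : AddCircle (1 : ℝ)))
          + fun m : ℕ => y ((α * m : ℝ) : AddCircle (1 : ℝ)) := by
      funext m; simp
    rw [this]; exact Submodule.add_mem _ hx hy
  · intro c x _ hx
    have : (fun m : ℕ => (c • x) ((α * m : ℝ) : AddCircle (1 : ℝ)))
        = c • fun m : ℕ => x ((α * m : ℝ) : AddCircle (1 : ℝ)) := by
      funext m; simp
    rw [this]; exact Submodule.smul_mem _ c hx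

lemma approxE_orbit (α : ℝ) (f : C(AddCircle (1 : ℝ), ℂ)) :
    ApproxE (fun m : ℕ => f ((α * m : ℝ) : AddCircle (1 : ℝ))) := by
  haveI : Fact ((0 : ℝ) < 1) := ⟨one_pos⟩
  constructor
  · exact ⟨‖f‖, norm_nonneg f, fun m => f.norm_coe_le_norm _⟩
  · intro ε hε
    have htop : f ∈ (Submodule.span ℂ (Set.range (@fourier 1))).topologicalClosure :=
      by rw [span_fourier_closure_eq_top]; trivial
    have h2 : f ∈ closure ((Submodule.span ℂ (Set.range (@fourier 1)) : Submodule ℂ _) : Set _) :=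
      htop
    rw [Metric.mem_closure_iff] at h2
    obtain ⟨P, hPmem, hPd⟩ := h2 ε hε
    refine ⟨fun m : ℕ => P ((α * m : ℝ) : AddCircle (1 : ℝ)),
      orbit_spanFourier_mem_spanExp α hPmem, fun m => ?_⟩
    have h3 : ‖(f - P) ((α * m : ℝ) : AddCircle (1 : ℝ))‖ ≤ ‖f - P‖ :=
      (f - P).norm_coe_le_norm _
    simp only [ContinuousMap.sub_apply] at h3
    refine h3.trans ?_
    rw [← dist_eq_norm]
    exact le_of_lt hPd

/-- Piecewise-linear ramp: 1 on `(-∞, s]`, 0 on `[t, ∞)`. -/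
noncomputable def ramp (s t : ℝ) (y : ℝ) : ℝ := max 0 (min 1 ((t - y) / (t - s)))

lemma ramp_nonneg (s t y : ℝ) : 0 ≤ ramp s t y := le_max_left _ _

lemma ramp_le_one (s t y : ℝ) : ramp s t y ≤ 1 :=
  max_le zero_le_one (min_le_left _ _)

lemma ramp_eq_one {s t y : ℝ} (hst : s < t) (hy : y ≤ s) : ramp s t y = 1 := by
  have h1 : (1 : ℝ) ≤ (t - y) / (t - s) := by
    rw [le_div_iff₀ (by linarith)]
    linarith
  rw [ramp, min_eq_left h1, max_eq_right zero_le_one]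

lemma ramp_eq_zero {s t y : ℝ} (hst : s < t) (hy : t ≤ y) : ramp s t y = 0 := by
  have h1 : (t - y) / (t - s) ≤ 0 :=
    div_nonpos_of_nonpos_of_nonneg (by linarith) (by linarith)
  rw [ramp, max_eq_left]
  exact (min_le_right _ _).trans h1

lemma continuous_ramp {s t : ℝ} (hst : s < t) : Continuous (ramp s t) := by
  unfold ramp
  fun_prop

/-- The ramp as a complex-valued continuous map on the circle. -/
noncomputable def rampCM (s t : ℝ) (hst : s < t) : C(AddCircle (1 : ℝ), ℂ) where
  toFun x := (ramp s t ‖x‖ : ℂ)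
  continuous_toFun := by
    exact Complex.continuous_ofReal.comp ((continuous_ramp hst).comp continuous_norm)

lemma rampCM_apply {s t : ℝ} (hst : s < t) (x : ℝ) :
    rampCM s t hst ((x : ℝ) : AddCircle (1 : ℝ)) = (ramp s t (distNearestInt x) : ℂ) := by
  have : ‖((x : ℝ) : AddCircle (1 : ℝ))‖ = distNearestInt x := by
    rw [distNearestInt]
    exact UnitAddCircle.norm_eq
  simp [rampCM, this]

/-- The key convergence: averages of products of ramps along the orbit converge. -/
lemma hasAvg_prod_ramp (k : ℕ) (α : Fin k → ℝ) {s t : ℝ} (hst : s < t) :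
    HasAvg (fun m : ℕ => ((∏ i, ramp s t (distNearestInt (α i * m)) : ℝ) : ℂ)) := by
  have heq : (fun m : ℕ => ((∏ i, ramp s t (distNearestInt (α i * m)) : ℝ) : ℂ))
      = ∏ i, fun m : ℕ => rampCM s t hst ((α i * m : ℝ) : AddCircle (1 : ℝ)) := by
    funext m
    rw [Finset.prod_apply]
    push_cast
    exact Finset.prod_congr rfl fun i _ => (rampCM_apply hst (α i * m)).symm
  rw [heq]
  exact (Finset.prod_induction _ ApproxE (fun _ _ ha hb => ha.mul hb) ApproxE.one
    (fun i _ => approxE_orbit (α i) (rampCM s t hst))).hasAvg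

lemma distNearestInt_le (x : ℝ) (z : ℤ) : distNearestInt x ≤ |x - z| := round_le x z

lemma dist_fract {X Y : ℝ} : distNearestInt (X - Y) ≤ |Int.fract X - Int.fract Y| := by
  have h := distNearestInt_le (X - Y) (⌊X⌋ - ⌊Y⌋)
  refine h.trans (le_of_eq ?_)
  rw [Int.fract, Int.fract]
  push_cast
  ring_nf

lemma floor_eq_abs_lt {w : ℝ} (hw : 0 < w) {a b : ℝ} (h : ⌊a / w⌋ = ⌊b / w⌋) :
    |a - b| < w := by
  have h1 := Int.floor_le (a / w)
  have h2 := Int.lt_floor_add_one (a / w)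
  have h3 := Int.floor_le (b / w)
  have h4 := Int.lt_floor_add_one (b / w)
  rw [h] at h1 h2
  rw [abs_lt]
  have ha : a / w * w = a := div_mul_cancel₀ a hw.ne'
  have hb : b / w * w = b := div_mul_cancel₀ b hw.ne'
  constructor <;> nlinarith

noncomputable def cellF (k : ℕ) (α : Fin k → ℝ) (t : ℝ) (m : ℕ) : Fin k → ℕ :=
  fun i => (⌊Int.fract (α i * m) / t⌋).toNat

lemma exists_syndetic_bound (k : ℕ) (α : Fin k → ℝ) {t : ℝ} (ht : 0 < t) :
    ∃ M : ℕ, ∀ a : ℕ, ∃ n : ℕ, a ≤ n ∧ n ≤ a + M ∧ ∀ i, distNearestInt (α i * n) < t := by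
  classical
  have hbd : ∀ m i, cellF k α t m i ≤ (⌊1 / t⌋).toNat := by
    intro m i
    have h1 : Int.fract (α i * m) / t ≤ 1 / t :=
      (div_le_div_iff_of_pos_right ht).2 (Int.fract_lt_one _).le
    exact Int.toNat_le_toNat (Int.floor_le_floor h1)
  have hfin : (Set.range (cellF k α t)).Finite := by
    refine Set.Finite.subset (Set.Finite.pi (fun i : Fin k => Set.finite_Iic ((⌊1 / t⌋).toNat))) ?_
    rintro c ⟨m, rfl⟩
    intro i _
    exact hbd m i
  set rep : (Fin k → ℕ) → ℕ := fun c => if h : ∃ m, cellF k α t m = c then Nat.find h else 0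
    with hrep
  set M : ℕ := hfin.toFinset.sup rep with hM
  refine ⟨M, fun a => ?_⟩
  set c := cellF k α t (a + M) with hc
  have hex : ∃ m, cellF k α t m = c := ⟨a + M, rfl⟩
  have hrepc : rep c = Nat.find hex := by rw [hrep]; simp [hex]
  have hmem : c ∈ hfin.toFinset := by rw [Set.Finite.mem_toFinset]; exact ⟨a + M, rfl⟩
  have hle : rep c ≤ M := Finset.le_sup hmem
  have hspec : cellF k α t (rep c) = c := by rw [hrepc]; exact Nat.find_spec hex
  refine ⟨a + M - rep c, by omega, by omega, fun i => ?_⟩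
  have hcast : ((a + M - rep c : ℕ) : ℝ) = ((a + M : ℕ) : ℝ) - (rep c : ℕ) := by
    push_cast [Nat.cast_sub (by omega : rep c ≤ a + M)]
    ring
  have hmul : α i * ((a + M - rep c : ℕ) : ℝ)
      = α i * ((a + M : ℕ) : ℝ) - α i * ((rep c : ℕ) : ℝ) := by rw [hcast]; ring
  rw [hmul]
  refine lt_of_le_of_lt dist_fract ?_
  apply floor_eq_abs_lt ht
  have h1 : cellF k α t (a + M) i = cellF k α t (rep c) i := by rw [hspec]
  have hnn : ∀ m : ℕ, (0 : ℤ) ≤ ⌊Int.fract (α i * m) / t⌋ := by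
    intro m
    exact Int.floor_nonneg.2 (div_nonneg (Int.fract_nonneg _) ht.le)
  simp only [cellF] at h1
  have n1 := hnn (a + M)
  have n2 := hnn (rep c)
  omega

/-! ### Counting and density -/

/-- The density sequence. -/
noncomputable def dseq (E : Set ℕ) (N : ℕ) : ℝ := (countIn E N : ℝ) / N

lemma countIn_le (E : Set ℕ) (N : ℕ) : countIn E N ≤ N := by
  classical
  calc countIn E N ≤ (Finset.Icc 1 N).card := Finset.card_filter_le _ _
    _ = N := by rw [Nat.card_Icc]; omega

lemma dseq_nonneg (E : Set ℕ) (N : ℕ) : 0 ≤ dseq E N :=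
  div_nonneg (Nat.cast_nonneg _) (Nat.cast_nonneg _)

lemma dseq_le_one (E : Set ℕ) (N : ℕ) : dseq E N ≤ 1 := by
  rcases Nat.eq_zero_or_pos N with h | h
  · simp [dseq, h, countIn]
  rw [dseq, div_le_one (by positivity)]
  exact_mod_cast countIn_le E N

open Classical in
lemma countIn_cast (E : Set ℕ) (N : ℕ) :
    (countIn E N : ℝ) = ∑ m ∈ Finset.Icc 1 N, (if m ∈ E then (1 : ℝ) else 0) := by
  classical
  rw [countIn, Finset.card_filter]
  push_cast [apply_ite (Nat.cast : ℕ → ℝ)]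
  rfl

lemma countIn_mono {E F : Set ℕ} (h : E ⊆ F) (N : ℕ) : countIn E N ≤ countIn F N := by
  classical
  unfold countIn
  apply Finset.card_le_card
  intro m hm
  simp only [Finset.mem_filter] at *
  exact ⟨hm.1, h hm.2⟩

lemma countIn_lower {E : Set ℕ} {M : ℕ}
    (hsyn : ∀ a : ℕ, ∃ n : ℕ, a ≤ n ∧ n ≤ a + M ∧ n ∈ E) (N : ℕ) :
    N / (M + 1) ≤ countIn E N := by
  classical
  choose g hg1 hg2 hg3 using hsyn
  set K := N / (M + 1) with hK
  set f : ℕ → ℕ := fun j => g (j * (M + 1) + 1) with hf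
  have hmaps : ∀ j ∈ Finset.range K, f j ∈ (Finset.Icc 1 N).filter (fun n => n ∈ E) := by
    intro j hj
    rw [Finset.mem_range] at hj
    simp only [hf]
    have h1 := hg1 (j * (M + 1) + 1)
    have h2 := hg2 (j * (M + 1) + 1)
    have h3 := hg3 (j * (M + 1) + 1)
    have hup : (j + 1) * (M + 1) ≤ K * (M + 1) := Nat.mul_le_mul_right _ hj
    have hKN : K * (M + 1) ≤ N := Nat.div_mul_le_self N (M + 1)
    refine Finset.mem_filter.2 ⟨Finset.mem_Icc.2 ⟨by omega, ?_⟩, h3⟩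
    have e1 : j * (M + 1) + 1 + M = (j + 1) * (M + 1) := by ring
    calc g (j * (M + 1) + 1) ≤ j * (M + 1) + 1 + M := h2
      _ = (j + 1) * (M + 1) := e1
      _ ≤ K * (M + 1) := hup
      _ ≤ N := hKN
  have key : ∀ j j' : ℕ, j < j' → f j ≠ f j' := by
    intro j j' hlt hjj
    have h2 := hg2 (j * (M + 1) + 1)
    have h1 := hg1 (j' * (M + 1) + 1)
    have hmul : (j + 1) * (M + 1) ≤ j' * (M + 1) := Nat.mul_le_mul_right _ (by omega)
    have he : j * (M + 1) + 1 + M = (j + 1) * (M + 1) := by ring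
    simp only [hf] at hjj
    have habs : g (j' * (M + 1) + 1) < g (j' * (M + 1) + 1) :=
      calc g (j' * (M + 1) + 1) = g (j * (M + 1) + 1) := hjj.symm
        _ ≤ (j + 1) * (M + 1) := h2.trans (le_of_eq he)
        _ ≤ j' * (M + 1) := hmul
        _ < g (j' * (M + 1) + 1) := lt_of_lt_of_le (Nat.lt_succ_self _) h1
    exact absurd habs (lt_irrefl _)
  have hinj : Set.InjOn f (Finset.range K) := by
    intro j _ j' _ hjj
    rcases lt_trichotomy j j' with h | h | h
    · exact absurd hjj (key j j' h)
    · exact h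
    · exact absurd hjj.symm (key j' j h)
  calc K = (Finset.range K).card := (Finset.card_range K).symm
    _ ≤ _ := Finset.card_le_card_of_injOn f hmaps hinj

/-! ### The Bohr set machinery -/

/-- The Bohr set of radius `t`. -/
def Eset (k : ℕ) (α : Fin k → ℝ) (t : ℝ) : Set ℕ :=
  {m : ℕ | ∀ i : Fin k, distNearestInt (α i * (m : ℝ)) < t}

lemma Eset_mono (k : ℕ) (α : Fin k → ℝ) {s t : ℝ} (hst : s ≤ t) :
    Eset k α s ⊆ Eset k α t := fun m hm i => lt_of_lt_of_le (hm i) hst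

lemma dseq_mono {E F : Set ℕ} (h : E ⊆ F) (N : ℕ) : dseq E N ≤ dseq F N := by
  rcases Nat.eq_zero_or_pos N with h0 | h0
  · simp [dseq, h0]
  rw [dseq, dseq]
  exact div_le_div_of_nonneg_right (by exact_mod_cast countIn_mono h N) (Nat.cast_nonneg N)

open Classical in
lemma key_sandwich (k : ℕ) (α : Fin k → ℝ) {s t : ℝ} (hst : s < t) :
    limsup (dseq (Eset k α s)) atTop ≤ liminf (dseq (Eset k α t)) atTop := by
  obtain ⟨L, hL⟩ := hasAvg_prod_ramp k α hst
  set w : ℕ → ℝ := fun m => ∏ i, ramp s t (distNearestInt (α i * m)) with hw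
  set rA : ℕ → ℝ := fun N => (∑ m ∈ Finset.Icc 1 N, w m) / N with hrA
  have hcast : ∀ N, cavg (fun m : ℕ => ((w m : ℝ) : ℂ)) N = ((rA N : ℝ) : ℂ) := by
    intro N
    rw [cavg, hrA]
    push_cast
    rw [div_eq_inv_mul]
    simp [smul_eq_mul]
  have hrAtend : Tendsto rA atTop (nhds L.re) := by
    have h1 : Tendsto (fun N => (cavg (fun m : ℕ => ((w m : ℝ) : ℂ)) N).re) atTop
        (nhds L.re) := (Complex.continuous_re.tendsto L).comp hL
    refine h1.congr fun N => ?_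
    rw [hcast]
    simp
  have hwnn : ∀ m, 0 ≤ w m := fun m => Finset.prod_nonneg fun i _ => ramp_nonneg _ _ _
  have hub : ∀ N, dseq (Eset k α s) N ≤ rA N := by
    intro N
    rcases Nat.eq_zero_or_pos N with h0 | h0
    · simp [dseq, h0, hrA, countIn]
    rw [dseq, countIn_cast, hrA]
    refine div_le_div_of_nonneg_right (Finset.sum_le_sum fun m hm => ?_) (Nat.cast_nonneg N)
    by_cases hmem : m ∈ Eset k α s
    · rw [if_pos hmem, hw]
      refine le_of_eq (Finset.prod_eq_one fun i _ => ?_).symm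
      exact ramp_eq_one hst (le_of_lt (hmem i))
    · rw [if_neg hmem]
      exact hwnn m
  have hlb : ∀ N, rA N ≤ dseq (Eset k α t) N := by
    intro N
    rcases Nat.eq_zero_or_pos N with h0 | h0
    · simp [dseq, h0, hrA, countIn]
    rw [dseq, countIn_cast, hrA]
    refine div_le_div_of_nonneg_right (Finset.sum_le_sum fun m hm => ?_) (Nat.cast_nonneg N)
    by_cases hmem : m ∈ Eset k α t
    · rw [if_pos hmem, hw]
      exact Finset.prod_le_one (fun i _ => ramp_nonneg _ _ _) (fun i _ => ramp_le_one _ _ _)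
    · rw [if_neg hmem]
      have : ∃ i : Fin k, t ≤ distNearestInt (α i * m) := by
        by_contra hno
        push_neg at hno
        exact hmem fun i => hno i
      obtain ⟨i, hi⟩ := this
      rw [hw]
      exact le_of_eq (Finset.prod_eq_zero (Finset.mem_univ i) (ramp_eq_zero hst hi))
  calc limsup (dseq (Eset k α s)) atTop ≤ limsup rA atTop :=
        limsup_le_limsup (Eventually.of_forall hub)
          (isCoboundedUnder_le_of_le atTop fun N => dseq_nonneg _ N)
          hrAtend.isBoundedUnder_le
    _ = L.re := hrAtend.limsup_eq
    _ = liminf rA atTop := hrAtend.liminf_eq.symm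
    _ ≤ liminf (dseq (Eset k α t)) atTop :=
        liminf_le_liminf (Eventually.of_forall hlb)
          hrAtend.isBoundedUnder_ge
          (isCoboundedUnder_ge_of_le atTop fun N => dseq_le_one _ N)

/-- The upper density of the Bohr set, as a function of the radius. -/
noncomputable def Dfun (k : ℕ) (α : Fin k → ℝ) (t : ℝ) : ℝ :=
  limsup (dseq (Eset k α t)) atTop

lemma Dfun_mono (k : ℕ) (α : Fin k → ℝ) : Monotone (Dfun k α) := by
  intro s t hst
  refine limsup_le_limsup (Eventually.of_forall fun N => dseq_mono (Eset_mono k α hst) N)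
    (isCoboundedUnder_le_of_le atTop fun N => dseq_nonneg _ N)
    (isBoundedUnder_of ⟨1, fun N => dseq_le_one _ N⟩)

/-- A Bohr set with a slightly shrunk radius has a natural density that
exists and is positive. -/
theorem stmt_13 (k : ℕ) (α : Fin k → ℝ) (δ : ℝ) (hδ : 0 < δ) :
    ∃ δ' : ℝ, 0 < δ' ∧ δ' ≤ δ ∧
      PosDensity {m : ℕ | ∀ i : Fin k, distNearestInt (α i * (m : ℝ)) < δ'} := by
  set δ₀ : ℝ := min δ 1 with hδ₀def
  have hδ₀ : 0 < δ₀ := lt_min hδ one_pos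
  -- pick a continuity point of the upper-density function in (0, δ₀)
  have hcnt := (Dfun_mono k α).countable_not_continuousAt
  have hex : ∃ t₀ ∈ Set.Ioo (0 : ℝ) δ₀, ContinuousAt (Dfun k α) t₀ := by
    by_contra hno
    push_neg at hno
    have hsub : Set.Ioo (0 : ℝ) δ₀ ⊆ {x | ¬ContinuousAt (Dfun k α) x} := fun x hx => hno x hx
    have hc : (Set.Ioo (0 : ℝ) δ₀).Countable := hcnt.mono hsub
    have h0 := hc.measure_zero (MeasureTheory.volume)
    rw [Real.volume_Ioo] at h0
    simp only [sub_zero] at h0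
    rw [ENNReal.ofReal_eq_zero] at h0
    linarith
  obtain ⟨t₀, ht₀mem, ht₀c⟩ := hex
  rw [Set.mem_Ioo] at ht₀mem
  obtain ⟨ht₀pos, ht₀lt⟩ := ht₀mem
  -- the limit exists at t₀
  have hA : Dfun k α t₀ ≤ liminf (dseq (Eset k α t₀)) atTop := by
    have hsn : Tendsto (fun n : ℕ => t₀ - 1 / (n + 1)) atTop (nhds t₀) := by
      have h1 : Tendsto (fun n : ℕ => 1 / ((n : ℝ) + 1)) atTop (nhds 0) :=
        tendsto_one_div_add_atTop_nhds_zero_nat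
      have h2 := (tendsto_const_nhds : Tendsto (fun _ : ℕ => t₀) atTop (nhds t₀)).sub h1
      simpa using h2
    have hDsn : Tendsto (fun n : ℕ => Dfun k α (t₀ - 1 / (n + 1))) atTop
        (nhds (Dfun k α t₀)) := ht₀c.tendsto.comp hsn
    refine le_of_tendsto hDsn (Eventually.of_forall fun n => ?_)
    have hlt : t₀ - 1 / ((n : ℝ) + 1) < t₀ := by
      have : (0 : ℝ) < 1 / ((n : ℝ) + 1) := by positivity
      linarith
    exact key_sandwich k α hlt
  have hB : liminf (dseq (Eset k α t₀)) atTop ≤ Dfun k α t₀ :=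
    liminf_le_limsup (isBoundedUnder_of ⟨1, fun N => dseq_le_one _ N⟩)
      (isBoundedUnder_of ⟨0, fun N => dseq_nonneg _ N⟩)
  have heq : liminf (dseq (Eset k α t₀)) atTop = Dfun k α t₀ := le_antisymm hB hA
  have htd : Tendsto (dseq (Eset k α t₀)) atTop (nhds (Dfun k α t₀)) :=
    tendsto_of_liminf_eq_limsup heq rfl
      (isBoundedUnder_of ⟨1, fun N => dseq_le_one _ N⟩)
      (isBoundedUnder_of ⟨0, fun N => dseq_nonneg _ N⟩)
  -- positivity via syndeticity
  obtain ⟨M, hM⟩ := exists_syndetic_bound k α ht₀pos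
  have hsyn : ∀ a : ℕ, ∃ n : ℕ, a ≤ n ∧ n ≤ a + M ∧ n ∈ Eset k α t₀ := by
    intro a
    obtain ⟨n, h1, h2, h3⟩ := hM a
    exact ⟨n, h1, h2, h3⟩
  have hlow : ∀ N : ℕ, 2 * M + 2 ≤ N → 1 / (2 * ((M : ℝ) + 1)) ≤ dseq (Eset k α t₀) N := by
    intro N hN
    have hcount := countIn_lower hsyn N
    set K := N / (M + 1) with hKdef
    have hNpos : 0 < N := by omega
    have hK1 : 1 ≤ K := (Nat.one_le_div_iff (by omega)).2 (by omega)
    have hNle : N ≤ K * (M + 1) + M := by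
      have h1 := Nat.div_add_mod N (M + 1)
      rw [← hKdef] at h1
      have h2 : N % (M + 1) < M + 1 := Nat.mod_lt _ (by omega)
      have h3 : (M + 1) * K = K * (M + 1) := Nat.mul_comm _ _
      omega
    have hK1' : (1 : ℝ) ≤ (K : ℝ) := by exact_mod_cast hK1
    have hNle' : (N : ℝ) ≤ (K : ℝ) * ((M : ℝ) + 1) + M := by exact_mod_cast hNle
    have hNpos' : (0 : ℝ) < N := by exact_mod_cast hNpos
    have hstep : 1 / (2 * ((M : ℝ) + 1)) ≤ (K : ℝ) / N := by
      rw [div_le_div_iff₀ (by positivity) hNpos']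
      nlinarith
    refine hstep.trans ?_
    rw [dseq]
    exact div_le_div_of_nonneg_right (by exact_mod_cast hcount) (Nat.cast_nonneg N)
  have hdpos : 1 / (2 * ((M : ℝ) + 1)) ≤ Dfun k α t₀ :=
    ge_of_tendsto htd (eventually_atTop.2 ⟨2 * M + 2, hlow⟩)
  exact ⟨t₀, ht₀pos, le_trans ht₀lt.le (min_le_left _ _),
    Dfun k α t₀, lt_of_lt_of_le (by positivity) hdpos, htd⟩
end

section
/- Let λ ∈ ℝ be irrational, let δ > 0, and let β > 0 satisfy β < δ/(1 + |λ|). Define E = {m ∈ ℕ : ‖β·m‖ < δ and ‖λ·β·m‖ < δ}, f₁(t) = t^{3/2}, and f₂(t) = λ·t^{3/2} + t. Then R_{f₁}(E) ∩ R_{f₂}(E) ⊆ {n ∈ ℕ : ‖β·n‖ < 5δ}. -/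
open Filter

lemma dni_le_int (x : ℝ) (k : ℤ) : distNearestInt x ≤ |x - k| := round_le x k

lemma dni_sub_le (x y : ℝ) :
    distNearestInt (x - y) ≤ distNearestInt x + distNearestInt y := by
  have h := dni_le_int (x - y) (round x - round y)
  refine h.trans ?_
  unfold distNearestInt
  push_cast
  calc |x - y - ((round x : ℝ) - round y)| = |(x - round x) - (y - round y)| := by ring_nf
    _ ≤ |x - round x| + |y - round y| := abs_sub _ _

lemma dni_add_small (x r : ℝ) :
    distNearestInt (x + r) ≤ distNearestInt x + |r| := by
  have h := dni_le_int (x + r) (round x)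
  refine h.trans ?_
  unfold distNearestInt
  calc |x + r - round x| = |(x - round x) + r| := by ring_nf
    _ ≤ |x - round x| + |r| := abs_add_le _ _

/-- The non-thickness inclusion in the proof of Theorem 1.4(ii):
R_{f₁}(E) ∩ R_{f₂}(E) ⊆ {n : ‖β n‖ < 5δ}. -/
theorem stmt_16 (lam : ℝ) (hlam : Irrational lam) (δ β : ℝ) (hδ : 0 < δ)
    (hβ0 : 0 < β) (hβ : β < δ / (1 + |lam|))
    (E : Set ℕ)
    (hE : E = {m : ℕ | distNearestInt (β * (m : ℝ)) < δ ∧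
      distNearestInt (lam * β * (m : ℝ)) < δ}) :
    retSetFloor (fun t => t ^ ((3 : ℝ) / 2)) E ∩
        retSetFloor (fun t => lam * t ^ ((3 : ℝ) / 2) + t) E
      ⊆ {n : ℕ | distNearestInt (β * (n : ℝ)) < 5 * δ} := by
  intro n hn
  obtain ⟨h1, h2⟩ := hn
  obtain ⟨m, m', hm, hm', heq1⟩ := h1
  obtain ⟨k, k', hk, hk', heq2⟩ := h2
  subst hE
  obtain ⟨hm1, hm2⟩ := hm
  obtain ⟨hm'1, hm'2⟩ := hm'
  obtain ⟨hk1, _⟩ := hk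
  obtain ⟨hk'1, _⟩ := hk'
  set A : ℤ := ⌊(n : ℝ) ^ ((3:ℝ)/2)⌋ with hA
  set B : ℤ := ⌊lam * (n : ℝ) ^ ((3:ℝ)/2) + (n : ℝ)⌋ with hB
  have hmr : (m' : ℝ) = (m : ℝ) + (A : ℝ) := by exact_mod_cast heq1
  have hkr : (k' : ℝ) = (k : ℝ) + (B : ℝ) := by exact_mod_cast heq2
  -- bounds on dni of β*A, lam*β*A, β*B
  have hbA : distNearestInt (β * (A : ℝ)) < 2 * δ := by
    have : β * (A : ℝ) = β * (m' : ℝ) - β * (m : ℝ) := by rw [hmr]; ring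
    rw [this]
    calc distNearestInt (β * (m' : ℝ) - β * (m : ℝ))
        ≤ distNearestInt (β * (m' : ℝ)) + distNearestInt (β * (m : ℝ)) := dni_sub_le _ _
      _ < 2 * δ := by linarith
  have hlbA : distNearestInt (lam * β * (A : ℝ)) < 2 * δ := by
    have : lam * β * (A : ℝ) = lam * β * (m' : ℝ) - lam * β * (m : ℝ) := by rw [hmr]; ring
    rw [this]
    calc distNearestInt (lam * β * (m' : ℝ) - lam * β * (m : ℝ))
        ≤ distNearestInt (lam * β * (m' : ℝ)) + distNearestInt (lam * β * (m : ℝ)) :=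
          dni_sub_le _ _
      _ < 2 * δ := by linarith
  have hbB : distNearestInt (β * (B : ℝ)) < 2 * δ := by
    have : β * (B : ℝ) = β * (k' : ℝ) - β * (k : ℝ) := by rw [hkr]; ring
    rw [this]
    calc distNearestInt (β * (k' : ℝ) - β * (k : ℝ))
        ≤ distNearestInt (β * (k' : ℝ)) + distNearestInt (β * (k : ℝ)) := dni_sub_le _ _
      _ < 2 * δ := by linarith
  -- fractional parts
  set x : ℝ := (n : ℝ) ^ ((3:ℝ)/2) with hx
  have hfA0 : (0:ℝ) ≤ x - (A : ℝ) := by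
    have := Int.floor_le x; linarith
  have hfA1 : x - (A : ℝ) < 1 := by
    have := Int.lt_floor_add_one x; linarith
  have hfB0 : (0:ℝ) ≤ (lam * x + n) - (B : ℝ) := by
    have := Int.floor_le (lam * x + (n : ℝ)); linarith
  have hfB1 : (lam * x + n) - (B : ℝ) < 1 := by
    have := Int.lt_floor_add_one (lam * x + (n : ℝ)); linarith
  have hlpos : (0:ℝ) < 1 + |lam| := by positivity
  have hβδ : β * (1 + |lam|) < δ := (lt_div_iff₀ hlpos).mp hβ
  have hr : |β * ((lam * x + n) - (B : ℝ)) - lam * (β * (x - (A : ℝ)))|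
      < δ := by
    have h1 : |β * ((lam * x + n) - (B : ℝ))| ≤ β := by
      rw [abs_mul, abs_of_pos hβ0, abs_of_nonneg hfB0]
      nlinarith
    have h2 : |lam * (β * (x - (A : ℝ)))| ≤ |lam| * β := by
      rw [abs_mul, abs_mul, abs_of_pos hβ0, abs_of_nonneg hfA0]
      have : |lam| * (β * (x - (A : ℝ))) ≤ |lam| * (β * 1) := by
        apply mul_le_mul_of_nonneg_left _ (abs_nonneg lam)
        nlinarith
      linarith [this]
    calc |β * ((lam * x + n) - (B : ℝ)) - lam * (β * (x - (A : ℝ)))|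
        ≤ |β * ((lam * x + n) - (B : ℝ))| + |lam * (β * (x - (A : ℝ)))| := abs_sub _ _
      _ ≤ β + |lam| * β := add_le_add h1 h2
      _ < δ := by nlinarith
  have key : β * (n : ℝ) = (β * (B : ℝ) - lam * β * (A : ℝ)) +
      (β * ((lam * x + n) - (B : ℝ)) - lam * (β * (x - (A : ℝ)))) := by ring
  show distNearestInt (β * (n : ℝ)) < 5 * δ
  rw [key]
  calc distNearestInt ((β * (B : ℝ) - lam * β * (A : ℝ)) +
          (β * ((lam * x + n) - (B : ℝ)) - lam * (β * (x - (A : ℝ)))))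
      ≤ distNearestInt (β * (B : ℝ) - lam * β * (A : ℝ)) +
        |β * ((lam * x + n) - (B : ℝ)) - lam * (β * (x - (A : ℝ)))| := dni_add_small _ _
    _ ≤ distNearestInt (β * (B : ℝ)) + distNearestInt (lam * β * (A : ℝ)) +
        |β * ((lam * x + n) - (B : ℝ)) - lam * (β * (x - (A : ℝ)))| := by
          linarith [dni_sub_le (β * (B : ℝ)) (lam * β * (A : ℝ))]
    _ < 5 * δ := by linarith
end

section
/- Let λ ∈ ℝ be irrational and let β > 0 be such that 1, β, λβ are linearly independent over ℚ. Let δ > 0 and define E = {m ∈ ℕ : ‖β·m‖ < δ and ‖λ·β·m‖ < δ}. Then for every integer r with ‖β·r‖ < 2δ and ‖λ·β·r‖ < 2δ, there exists m ∈ ℕ with m + r ∈ ℕ such that m ∈ E and m + r ∈ E. -/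
open Filter

def grp (lam β : ℝ) : AddSubgroup (ℝ × ℝ) where
  carrier := {p | ∃ n a b : ℤ, p = ((n : ℝ) * β + a, (n : ℝ) * (lam * β) + b)}
  zero_mem' := ⟨0, 0, 0, by simp [Prod.ext_iff]⟩
  add_mem' := by
    rintro p q ⟨n, a, b, rfl⟩ ⟨n', a', b', rfl⟩
    exact ⟨n + n', a + a', b + b', by simp [Prod.ext_iff]; push_cast; constructor <;> ring⟩
  neg_mem' := by
    rintro p ⟨n, a, b, rfl⟩
    exact ⟨-n, -a, -b, by simp [Prod.ext_iff]; push_cast; constructor <;> ring⟩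

lemma my_dirichlet (b c : ℝ) {η : ℝ} (hη : 0 < η) :
    ∃ q : ℕ, 0 < q ∧ ∃ A B : ℤ, |(q : ℝ) * b + A| < η ∧ |(q : ℝ) * c + B| < η := by
  obtain ⟨N, hN⟩ := exists_nat_gt (1 / η)
  have hN0 : 0 < N := by
    rcases Nat.eq_zero_or_pos N with h | h
    · subst h; simp at hN; exact absurd hN (not_lt.2 (by positivity))
    · exact h
  have hNR : (0 : ℝ) < N := by exact_mod_cast hN0
  have hinv : 1 / (N : ℝ) < η := by
    rw [div_lt_iff₀ hNR]
    rw [div_lt_iff₀ hη] at hN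
    nlinarith
  set g : ℕ → ℤ × ℤ := fun n => (⌊(N : ℝ) * Int.fract ((n : ℝ) * b)⌋,
    ⌊(N : ℝ) * Int.fract ((n : ℝ) * c)⌋) with hg
  have hmaps : ∀ n ∈ Finset.range (N ^ 2 + 1), g n ∈
      Finset.Ico (0 : ℤ) N ×ˢ Finset.Ico (0 : ℤ) N := by
    intro n _
    have key : ∀ x : ℝ, ⌊(N : ℝ) * Int.fract x⌋ ∈ Finset.Ico (0 : ℤ) N := by
      intro x
      rw [Finset.mem_Ico]
      refine ⟨Int.floor_nonneg.2 (mul_nonneg hNR.le (Int.fract_nonneg x)), ?_⟩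
      refine Int.floor_lt.2 ?_
      push_cast
      nlinarith [Int.fract_lt_one x, Int.fract_nonneg x]
    exact Finset.mem_product.2 ⟨key _, key _⟩
  have hcard : (Finset.Ico (0 : ℤ) N ×ˢ Finset.Ico (0 : ℤ) N).card
      < (Finset.range (N ^ 2 + 1)).card := by
    simp [Finset.card_product]
    nlinarith
  obtain ⟨i, hi, j, hj, hij, hgij⟩ :=
    Finset.exists_ne_map_eq_of_card_lt_of_maps_to hcard hmaps
  wlog hlt : i < j generalizing i j
  · exact this j hj i hi hij.symm hgij.symm (by omega)
  refine ⟨j - i, by omega, ?_⟩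
  have hfr : ∀ x y : ℝ, ⌊(N : ℝ) * Int.fract x⌋ = ⌊(N : ℝ) * Int.fract y⌋ →
      |Int.fract x - Int.fract y| < 1 / N := by
    intro x y hxy
    rw [abs_lt]
    have h1 := Int.fract_nonneg ((N : ℝ) * Int.fract x)
    have h2 := Int.fract_lt_one ((N : ℝ) * Int.fract x)
    have h3 := Int.fract_nonneg ((N : ℝ) * Int.fract y)
    have h4 := Int.fract_lt_one ((N : ℝ) * Int.fract y)
    rw [Int.fract] at h1 h2 h3 h4
    rw [hxy] at h1 h2
    have hNi : (1 / (N : ℝ)) * N = 1 := by field_simp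
    constructor
    · nlinarith
    · nlinarith
  rw [hg] at hgij
  simp only [Prod.mk.injEq] at hgij
  have hb := hfr _ _ hgij.1
  have hc := hfr _ _ hgij.2
  refine ⟨⌊(i : ℝ) * b⌋ - ⌊(j : ℝ) * b⌋, ⌊(i : ℝ) * c⌋ - ⌊(j : ℝ) * c⌋, ?_, ?_⟩
  · have he : ((j - i : ℕ) : ℝ) * b + ((⌊(i : ℝ) * b⌋ - ⌊(j : ℝ) * b⌋ : ℤ) : ℝ)
        = Int.fract ((j : ℝ) * b) - Int.fract ((i : ℝ) * b) := by
      rw [Int.fract, Int.fract]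
      push_cast [Nat.cast_sub hlt.le]
      ring
    rw [he]
    rw [abs_sub_comm]; exact hb.trans hinv
  · have he : ((j - i : ℕ) : ℝ) * c + ((⌊(i : ℝ) * c⌋ - ⌊(j : ℝ) * c⌋ : ℤ) : ℝ)
        = Int.fract ((j : ℝ) * c) - Int.fract ((i : ℝ) * c) := by
      rw [Int.fract, Int.fract]
      push_cast [Nat.cast_sub hlt.le]
      ring
    rw [he]
    rw [abs_sub_comm]; exact hc.trans hinv

lemma small_elts (lam β : ℝ)
    (hind : ∀ a b c : ℚ, (a : ℝ) + (b : ℝ) * β + (c : ℝ) * (lam * β) = 0 →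
      a = 0 ∧ b = 0 ∧ c = 0)
    {η : ℝ} (hη : 0 < η) :
    ∃ g : ℝ × ℝ, g ∈ grp lam β ∧ g ≠ 0 ∧ ‖g‖ < η := by
  obtain ⟨q, hq, A, B, h1, h2⟩ := my_dirichlet β (lam * β) hη
  refine ⟨((q : ℝ) * β + A, (q : ℝ) * (lam * β) + B), ⟨q, A, B, by push_cast; rfl⟩, ?_, ?_⟩
  · intro h
    rw [Prod.ext_iff] at h
    simp only [Prod.fst_zero, Prod.snd_zero] at h
    have := hind A q 0 (by push_cast; linarith [h.1])
    have hq0 : (q : ℚ) = 0 := this.2.1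
    exact_mod_cast absurd hq0 (by positivity)
  · rw [Prod.norm_def]
    simp only [Real.norm_eq_abs]
    exact max_lt h1 h2

lemma line_in_closure (lam β : ℝ)
    (hind : ∀ a b c : ℚ, (a : ℝ) + (b : ℝ) * β + (c : ℝ) * (lam * β) = 0 →
      a = 0 ∧ b = 0 ∧ c = 0) :
    ∃ u : ℝ × ℝ, ‖u‖ = 1 ∧ ∀ t : ℝ, t • u ∈ closure (grp lam β : Set (ℝ × ℝ)) := by
  have hsel : ∀ k : ℕ, ∃ g : ℝ × ℝ, g ∈ grp lam β ∧ g ≠ 0 ∧ ‖g‖ < 1 / (k + 1) := by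
    intro k
    exact small_elts lam β hind (by positivity)
  choose g hmem hne hsm using hsel
  set u' : ℕ → ℝ × ℝ := fun k => ‖g k‖⁻¹ • g k with hu'
  have husph : ∀ k, u' k ∈ Metric.sphere (0 : ℝ × ℝ) 1 := by
    intro k
    simp only [hu', Metric.mem_sphere, dist_zero_right]
    exact norm_smul_inv_norm (hne k)
  obtain ⟨u, husp, φ, hφ, hconv⟩ :=
    (isCompact_sphere (0 : ℝ × ℝ) 1).tendsto_subseq husph
  have hun : ‖u‖ = 1 := by simpa using husp
  refine ⟨u, hun, fun t => ?_⟩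
  set c : ℕ → ℝ := fun k => (round (t / ‖g (φ k)‖) : ℝ) * ‖g (φ k)‖ with hc
  have hgn : ∀ k, ‖g (φ k)‖ ≠ 0 := fun k => norm_ne_zero_iff.2 (hne (φ k))
  have hct : Filter.Tendsto c Filter.atTop (nhds t) := by
    rw [tendsto_iff_dist_tendsto_zero]
    refine squeeze_zero (fun k => dist_nonneg) (fun k => ?_)
      (tendsto_one_div_add_atTop_nhds_zero_nat)
    have h0 : 0 < ‖g (φ k)‖ := norm_pos_iff.2 (hne (φ k))
    have hr := abs_sub_round (t / ‖g (φ k)‖)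
    have hkk : ‖g (φ k)‖ < 1 / ((φ k : ℝ) + 1) := hsm (φ k)
    have hmono : (1 : ℝ) / ((φ k : ℝ) + 1) ≤ 1 / ((k : ℝ) + 1) := by
      apply one_div_le_one_div_of_le (by positivity)
      have hk : k ≤ φ k := hφ.le_apply
      push_cast
      have : (k : ℝ) ≤ (φ k : ℝ) := by exact_mod_cast hk
      linarith
    rw [Real.dist_eq, hc]
    have habs : |(round (t / ‖g (φ k)‖) : ℝ) * ‖g (φ k)‖ - t|
        = |(round (t / ‖g (φ k)‖) : ℝ) - t / ‖g (φ k)‖| * ‖g (φ k)‖ := by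
      rw [← abs_of_pos h0, ← abs_mul]
      congr 1
      field_simp
      rw [abs_of_pos h0]
      ring
    rw [habs, abs_sub_comm]
    calc |t / ‖g (φ k)‖ - (round (t / ‖g (φ k)‖) : ℝ)| * ‖g (φ k)‖
        ≤ (1 / 2) * ‖g (φ k)‖ := mul_le_mul_of_nonneg_right hr h0.le
      _ ≤ 1 / ((k : ℝ) + 1) := by nlinarith
  have hw : Filter.Tendsto (fun k => c k • u' (φ k)) Filter.atTop (nhds (t • u)) :=
    hct.smul hconv
  refine mem_closure_of_tendsto hw (Filter.Eventually.of_forall fun k => ?_)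
  have : c k • u' (φ k) = ((round (t / ‖g (φ k)‖) : ℝ)) • g (φ k) := by
    simp only [hc, hu', smul_smul]
    congr 1
    rw [mul_assoc, mul_inv_cancel₀ (hgn k), mul_one]
  rw [this, Int.cast_smul_eq_zsmul]
  exact AddSubgroup.zsmul_mem _ (hmem (φ k)) _

lemma grp_dense (lam β : ℝ)
    (hind : ∀ a b c : ℚ, (a : ℝ) + (b : ℝ) * β + (c : ℝ) * (lam * β) = 0 →
      a = 0 ∧ b = 0 ∧ c = 0) :
    Dense (grp lam β : Set (ℝ × ℝ)) := by
  obtain ⟨u, hun, hline⟩ := line_in_closure lam β hind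
  set H := (grp lam β).topologicalClosure with hH
  have hHcoe : (H : Set (ℝ × ℝ)) = closure (grp lam β : Set (ℝ × ℝ)) := rfl
  set L : (ℝ × ℝ) →+ ℝ := AddMonoidHom.mk' (fun w => u.2 * w.1 - u.1 * w.2)
    (by intro x y; simp [Prod.fst_add, Prod.snd_add]; ring) with hL
  have hLa : ∀ w : ℝ × ℝ, L w = u.2 * w.1 - u.1 * w.2 := fun w => rfl
  have hune : u ≠ 0 := by
    intro h
    rw [h] at hun
    simp at hun
  rcases AddSubgroup.dense_or_cyclic (AddSubgroup.map L H) with hT | ⟨a, hTa⟩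
  · -- dense case: show density
    apply Dense.of_closure
    rw [← hHcoe]
    intro z
    rw [Metric.mem_closure_iff]
    intro ε hε
    obtain ⟨τ, hτball, hτT⟩ := Metric.dense_iff.1 hT (L z) ε hε
    obtain ⟨h, hhH, rfl⟩ := hτT
    have hn2 : (1 : ℝ) ≤ u.1 ^ 2 + u.2 ^ 2 := by
      rw [Prod.norm_def] at hun
      simp only [Real.norm_eq_abs] at hun
      rcases max_choice |u.1| |u.2| with hm | hm <;> rw [hm] at hun <;>
        nlinarith [sq_nonneg u.1, sq_nonneg u.2, abs_nonneg u.1, abs_nonneg u.2,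
          sq_abs u.1, sq_abs u.2]
    set n2 := u.1 ^ 2 + u.2 ^ 2 with hn2d
    set w : ℝ × ℝ := z - h with hw
    set s : ℝ := (u.1 * w.1 + u.2 * w.2) / n2 with hs
    refine ⟨h + s • u, H.add_mem hhH (hline s), ?_⟩
    have hn2pos : (0 : ℝ) < n2 := lt_of_lt_of_le one_pos hn2
    have hLw : |L w| < ε := by
      have : L w = L z - L h := by rw [hw]; simp [hLa]; ring
      rw [this]
      rw [Metric.mem_ball, Real.dist_eq] at hτball
      rw [abs_sub_comm]
      exact hτball
    have hu1 : |u.1| ≤ 1 := by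
      rw [Prod.norm_def] at hun
      simp only [Real.norm_eq_abs] at hun
      exact le_of_le_of_eq (le_max_left _ _) hun
    have hu2 : |u.2| ≤ 1 := by
      rw [Prod.norm_def] at hun
      simp only [Real.norm_eq_abs] at hun
      exact le_of_le_of_eq (le_max_right _ _) hun
    have hc1 : (z - (h + s • u)).1 = u.2 * L w / n2 := by
      simp only [Prod.fst_sub, Prod.snd_sub, Prod.fst_add, Prod.smul_fst, smul_eq_mul, hs, hLa, hw]
      field_simp
      ring
    have hc2 : (z - (h + s • u)).2 = -u.1 * L w / n2 := by
      simp only [Prod.fst_sub, Prod.snd_sub, Prod.snd_add, Prod.smul_snd, smul_eq_mul, hs, hLa, hw]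
      field_simp
      ring
    have key : ∀ v : ℝ, |v| ≤ 1 → |v * L w / n2| ≤ |L w| := by
      intro v hv
      rw [abs_div, abs_mul, abs_of_pos hn2pos]
      rw [div_le_iff₀ hn2pos]
      nlinarith [abs_nonneg (L w), abs_nonneg v]
    rw [dist_eq_norm, Prod.norm_def]
    simp only [Real.norm_eq_abs]
    apply max_lt
    · rw [hc1]; exact lt_of_le_of_lt (key u.2 hu2) hLw
    · rw [hc2]
      exact lt_of_le_of_lt (key (-u.1) (by rwa [abs_neg])) hLw
  · -- cyclic case: contradiction
    exfalso
    have hmem1 : ((1 : ℝ), (0 : ℝ)) ∈ H :=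
      (grp lam β).le_topologicalClosure ⟨0, 1, 0, by simp⟩
    have hmem2 : ((0 : ℝ), (1 : ℝ)) ∈ H :=
      (grp lam β).le_topologicalClosure ⟨0, 0, 1, by simp⟩
    have hmem3 : (β, lam * β) ∈ H :=
      (grp lam β).le_topologicalClosure ⟨1, 0, 0, by simp⟩
    have e1 : ∃ p : ℤ, (p : ℝ) * a = u.2 := by
      have := AddSubgroup.mem_map_of_mem L hmem1
      rw [hTa, AddSubgroup.mem_closure_singleton] at this
      obtain ⟨p, hp⟩ := this
      exact ⟨p, by rw [← zsmul_eq_mul, hp]; simp [hLa]⟩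
    have e2 : ∃ q : ℤ, (q : ℝ) * a = -u.1 := by
      have := AddSubgroup.mem_map_of_mem L hmem2
      rw [hTa, AddSubgroup.mem_closure_singleton] at this
      obtain ⟨q, hq⟩ := this
      exact ⟨q, by rw [← zsmul_eq_mul, hq]; simp [hLa]⟩
    have e3 : ∃ m : ℤ, (m : ℝ) * a = u.2 * β - u.1 * (lam * β) := by
      have := AddSubgroup.mem_map_of_mem L hmem3
      rw [hTa, AddSubgroup.mem_closure_singleton] at this
      obtain ⟨m, hm⟩ := this
      exact ⟨m, by rw [← zsmul_eq_mul, hm]; simp [hLa]⟩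
    obtain ⟨p, hp⟩ := e1
    obtain ⟨q, hq⟩ := e2
    obtain ⟨m, hm⟩ := e3
    have ha : a ≠ 0 := by
      intro h0
      rw [h0, mul_zero] at hp hq
      apply hune
      have : u.1 = 0 := by linarith [hq]
      have h2 : u.2 = 0 := hp.symm
      exact Prod.ext this (h2)
    have key : a * ((p : ℝ) * β + (q : ℝ) * (lam * β) - m) = 0 := by
      linear_combination β * hp + (lam * β) * hq - hm
    have hrel : (p : ℝ) * β + (q : ℝ) * (lam * β) - m = 0 :=
      (mul_eq_zero.1 key).resolve_left ha
    have := hind (-m) p q (by push_cast; linarith)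
    have hp0 : (p : ℚ) = 0 := this.2.1
    have hq0 : (q : ℚ) = 0 := this.2.2
    apply hune
    have hp0' : (p : ℝ) = 0 := by exact_mod_cast hp0
    have hq0' : (q : ℝ) = 0 := by exact_mod_cast hq0
    rw [hp0', zero_mul] at hp
    rw [hq0', zero_mul] at hq
    refine Prod.ext ?_ ?_
    · show u.1 = (0 : ℝ × ℝ).1
      simp only [Prod.fst_zero]
      linarith
    · show u.2 = (0 : ℝ × ℝ).2
      simp only [Prod.snd_zero]
      linarith

lemma nat_kronecker (lam β : ℝ)
    (hind : ∀ a b c : ℚ, (a : ℝ) + (b : ℝ) * β + (c : ℝ) * (lam * β) = 0 →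
      a = 0 ∧ b = 0 ∧ c = 0)
    (s t ε : ℝ) (hε : 0 < ε) (M : ℕ) :
    ∃ m : ℕ, M ≤ m ∧ ∃ a b : ℤ,
      |(m : ℝ) * β + a - s| < ε ∧ |(m : ℝ) * (lam * β) + b - t| < ε := by
  obtain ⟨g, hgball, hgmem⟩ := Metric.dense_iff.1 (grp_dense lam β hind) (s, t) (ε / 2)
    (by positivity)
  obtain ⟨n₀, a₀, b₀, rfl⟩ := hgmem
  rw [Metric.mem_ball, Prod.dist_eq, Real.dist_eq, Real.dist_eq] at hgball
  have h1 : |(n₀ : ℝ) * β + a₀ - s| < ε / 2 := lt_of_le_of_lt (le_max_left _ _) hgball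
  have h2 : |(n₀ : ℝ) * (lam * β) + b₀ - t| < ε / 2 := lt_of_le_of_lt (le_max_right _ _) hgball
  set k : ℕ := M + n₀.natAbs with hk
  have hη : (0 : ℝ) < ε / (2 * (k + 1)) := by positivity
  obtain ⟨q, hq0, A, B, hA, hB⟩ := my_dirichlet β (lam * β) hη
  set m : ℤ := n₀ + k * q with hm
  have hmM : (M : ℤ) ≤ m := by
    have hkq : (k : ℤ) ≤ (k : ℤ) * q :=
      le_mul_of_one_le_right (Int.ofNat_nonneg k) (by exact_mod_cast hq0)
    have h2 : -(n₀.natAbs : ℤ) ≤ n₀ := by omega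
    have h3 : (k : ℤ) = (M : ℤ) + n₀.natAbs := by rw [hk]; push_cast; ring
    rw [hm]
    linarith
  have hm0 : 0 ≤ m := le_trans (Int.ofNat_nonneg M) hmM
  have hcast : ((m.toNat : ℕ) : ℝ) = (n₀ : ℝ) + (k : ℝ) * (q : ℝ) := by
    have h1 : ((m.toNat : ℕ) : ℤ) = m := Int.toNat_of_nonneg hm0
    have h2 : ((m.toNat : ℕ) : ℝ) = (m : ℝ) := by exact_mod_cast h1
    rw [h2, hm]
    push_cast
    ring
  have hkpos : (0 : ℝ) < (k : ℝ) + 1 := by positivity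
  have hlt : (k : ℝ) * (ε / (2 * ((k : ℝ) + 1))) < ε / 2 := by
    have heq : (k : ℝ) * (ε / (2 * ((k : ℝ) + 1))) = ε / 2 * ((k : ℝ) / ((k : ℝ) + 1)) := by
      field_simp
    have hfrac : (k : ℝ) / ((k : ℝ) + 1) < 1 := by
      rw [div_lt_one hkpos]
      linarith
    rw [heq]
    nlinarith
  have hknn : (0 : ℝ) ≤ (k : ℝ) := Nat.cast_nonneg k
  refine ⟨m.toNat, by omega, a₀ + k * A, b₀ + k * B, ?_, ?_⟩
  · have expand : ((m.toNat : ℕ) : ℝ) * β + ((a₀ + k * A : ℤ) : ℝ) - s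
        = ((n₀ : ℝ) * β + a₀ - s) + (k : ℝ) * ((q : ℝ) * β + A) := by
      rw [hcast]
      push_cast
      ring
    rw [expand]
    calc |((n₀ : ℝ) * β + a₀ - s) + (k : ℝ) * ((q : ℝ) * β + A)|
        ≤ |(n₀ : ℝ) * β + a₀ - s| + |(k : ℝ) * ((q : ℝ) * β + A)| := abs_add_le _ _
      _ = |(n₀ : ℝ) * β + a₀ - s| + (k : ℝ) * |(q : ℝ) * β + A| := by
          rw [abs_mul, abs_of_nonneg hknn]
      _ < ε / 2 + ε / 2 := by
          have h9 := mul_le_mul_of_nonneg_left hA.le hknn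
          nlinarith [abs_nonneg ((q : ℝ) * β + A), hlt, h1]
      _ = ε := by ring
  · have expand : ((m.toNat : ℕ) : ℝ) * (lam * β) + ((b₀ + k * B : ℤ) : ℝ) - t
        = ((n₀ : ℝ) * (lam * β) + b₀ - t) + (k : ℝ) * ((q : ℝ) * (lam * β) + B) := by
      rw [hcast]
      push_cast
      ring
    rw [expand]
    calc |((n₀ : ℝ) * (lam * β) + b₀ - t) + (k : ℝ) * ((q : ℝ) * (lam * β) + B)|
        ≤ |(n₀ : ℝ) * (lam * β) + b₀ - t| + |(k : ℝ) * ((q : ℝ) * (lam * β) + B)| := abs_add_le _ _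
      _ = |(n₀ : ℝ) * (lam * β) + b₀ - t| + (k : ℝ) * |(q : ℝ) * (lam * β) + B| := by
          rw [abs_mul, abs_of_nonneg hknn]
      _ < ε / 2 + ε / 2 := by
          nlinarith [abs_nonneg ((q : ℝ) * (lam * β) + B), hlt, h2, hB]
      _ = ε := by ring

/-- Realizing differences in the Bohr set: if ‖β r‖ < 2δ and ‖λ β r‖ < 2δ,
then r is a difference of two elements of E. -/
theorem stmt_18 (lam β : ℝ) (hlam : Irrational lam) (hβ0 : 0 < β)
    (hind : ∀ a b c : ℚ, (a : ℝ) + (b : ℝ) * β + (c : ℝ) * (lam * β) = 0 →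
      a = 0 ∧ b = 0 ∧ c = 0)
    (δ : ℝ) (hδ : 0 < δ)
    (E : Set ℕ)
    (hE : E = {m : ℕ | distNearestInt (β * (m : ℝ)) < δ ∧
      distNearestInt (lam * β * (m : ℝ)) < δ})
    (r : ℤ)
    (hr1 : distNearestInt (β * (r : ℝ)) < 2 * δ)
    (hr2 : distNearestInt (lam * β * (r : ℝ)) < 2 * δ) :
    ∃ m m' : ℕ, (m' : ℤ) = (m : ℤ) + r ∧ m ∈ E ∧ m' ∈ E := by
  set x : ℝ := β * r - round (β * (r : ℝ)) with hx
  set y : ℝ := lam * β * r - round (lam * β * (r : ℝ)) with hy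
  have hxlt : |x| < 2 * δ := hr1
  have hylt : |y| < 2 * δ := hr2
  set ε : ℝ := min (δ - |x| / 2) (δ - |y| / 2) with hεd
  have hεx : ε ≤ δ - |x| / 2 := min_le_left _ _
  have hεy : ε ≤ δ - |y| / 2 := min_le_right _ _
  have hεpos : 0 < ε := lt_min (by linarith) (by linarith)
  obtain ⟨m, hmM, a, b, h1, h2⟩ :=
    nat_kronecker lam β hind (-(x / 2)) (-(y / 2)) ε hεpos r.natAbs
  have h1' : |(m : ℝ) * β + a + x / 2| < ε := by
    have : (m : ℝ) * β + a - -(x / 2) = (m : ℝ) * β + a + x / 2 := by ring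
    rwa [this] at h1
  have h2' : |(m : ℝ) * (lam * β) + b + y / 2| < ε := by
    have : (m : ℝ) * (lam * β) + b - -(y / 2) = (m : ℝ) * (lam * β) + b + y / 2 := by ring
    rwa [this] at h2
  have habsx : |x / 2| = |x| / 2 := by rw [abs_div]; norm_num
  have habsy : |y / 2| = |y| / 2 := by rw [abs_div]; norm_num
  have hmr0 : 0 ≤ (m : ℤ) + r := by omega
  refine ⟨m, ((m : ℤ) + r).toNat, Int.toNat_of_nonneg hmr0, ?_, ?_⟩
  · rw [hE]
    constructor
    · have hle : distNearestInt (β * (m : ℝ)) ≤ |β * (m : ℝ) - ((-a : ℤ) : ℝ)| :=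
        round_le (β * (m : ℝ)) (-a)
      have he : β * (m : ℝ) - ((-a : ℤ) : ℝ) = ((m : ℝ) * β + a + x / 2) + (-(x / 2)) := by
        push_cast
        ring
      rw [he] at hle
      calc distNearestInt (β * (m : ℝ))
          ≤ |(m : ℝ) * β + a + x / 2| + |(-(x / 2))| := hle.trans (abs_add_le _ _)
        _ < ε + |x| / 2 := by rw [abs_neg, habsx]; linarith
        _ ≤ δ := by linarith
    · have hle : distNearestInt (lam * β * (m : ℝ)) ≤ |lam * β * (m : ℝ) - ((-b : ℤ) : ℝ)| :=
        round_le (lam * β * (m : ℝ)) (-b)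
      have he : lam * β * (m : ℝ) - ((-b : ℤ) : ℝ)
          = ((m : ℝ) * (lam * β) + b + y / 2) + (-(y / 2)) := by
        push_cast
        ring
      rw [he] at hle
      calc distNearestInt (lam * β * (m : ℝ))
          ≤ |(m : ℝ) * (lam * β) + b + y / 2| + |(-(y / 2))| := hle.trans (abs_add_le _ _)
        _ < ε + |y| / 2 := by rw [abs_neg, habsy]; linarith
        _ ≤ δ := by linarith
  · rw [hE]
    have hcast : ((((m : ℤ) + r).toNat : ℕ) : ℝ) = (m : ℝ) + (r : ℝ) := by
      have := Int.toNat_of_nonneg hmr0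
      exact_mod_cast congrArg (fun z : ℤ => (z : ℝ)) this
    constructor
    · have hle : distNearestInt (β * ((((m : ℤ) + r).toNat : ℕ) : ℝ))
          ≤ |β * ((((m : ℤ) + r).toNat : ℕ) : ℝ) - ((round (β * (r : ℝ)) - a : ℤ) : ℝ)| :=
        round_le _ _
      have he : β * ((((m : ℤ) + r).toNat : ℕ) : ℝ) - ((round (β * (r : ℝ)) - a : ℤ) : ℝ)
          = ((m : ℝ) * β + a + x / 2) + x / 2 := by
        rw [hcast, hx]
        push_cast
        ring
      rw [he] at hle
      calc distNearestInt (β * ((((m : ℤ) + r).toNat : ℕ) : ℝ))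
          ≤ |(m : ℝ) * β + a + x / 2| + |x / 2| := hle.trans (abs_add_le _ _)
        _ < ε + |x| / 2 := by rw [habsx]; linarith
        _ ≤ δ := by linarith
    · have hle : distNearestInt (lam * β * ((((m : ℤ) + r).toNat : ℕ) : ℝ))
          ≤ |lam * β * ((((m : ℤ) + r).toNat : ℕ) : ℝ)
            - ((round (lam * β * (r : ℝ)) - b : ℤ) : ℝ)| :=
        round_le _ _
      have he : lam * β * ((((m : ℤ) + r).toNat : ℕ) : ℝ)
            - ((round (lam * β * (r : ℝ)) - b : ℤ) : ℝ)
          = ((m : ℝ) * (lam * β) + b + y / 2) + y / 2 := by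
        rw [hcast, hy]
        push_cast
        ring
      rw [he] at hle
      calc distNearestInt (lam * β * ((((m : ℤ) + r).toNat : ℕ) : ℝ))
          ≤ |(m : ℝ) * (lam * β) + b + y / 2| + |y / 2| := hle.trans (abs_add_le _ _)
        _ < ε + |y| / 2 := by rw [habsy]; linarith
        _ ≤ δ := by linarith
end
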